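/- arXiv:1804.08919 — 2 statements merged into one kernel-verified Lean document; each statement's English description precedes it below -/
import Mathlib

section
/- Let R be a commutative ring containing the rationals in which the only idempotents are 0 and 1. Then every weak convolution family (f_n)_{n≥0} in R[[x]] is in fact a convolution family: if ∑_{k=0}^n f_k(x) f_{n-k}(x) = f_n(2x) holds in R[[x]] for all n ≥ 0, then ∑_{k=0}^n f_k(x) f_{n-k}(y) = f_n(x+y) holds in R[[x,y]] for all n ≥ 0. -/
noncomputable section

open PowerSeries

/-- The embedding of `R[[t]]` into the two-variable power series ring `R[[x,t]]`
(where `x` is variable `0` and `t` is variable `1`), sending `t ↦ t`. -/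
def tEmb {R : Type*} [CommRing R] (Ψ : PowerSeries R) : MvPowerSeries (Fin 2) R :=
  fun e => if e 0 = 0 then PowerSeries.coeff (e 1) Ψ else 0

/-- Substitution of a multivariate power series `a` (intended to have zero constant
term) for the variable of a univariate power series `f`:  `f(a) = ∑ₙ fₙ aⁿ`.
When the constant term of `a` is zero, the coefficient of a monomial `e` in `aⁿ`
vanishes whenever `n` exceeds the total degree of `e`, so the finite sum below
computes the genuine substitution `∑ₙ fₙ aⁿ`. -/
def psubst {R : Type*} [CommRing R] {σ : Type*} (a : MvPowerSeries σ R)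
    (f : PowerSeries R) : MvPowerSeries σ R :=
  fun e => ∑ n ∈ Finset.range ((e.sum fun _ m => m) + 1),
    PowerSeries.coeff n f * MvPowerSeries.coeff e (a ^ n)

/-- The formal power series `e^{xΨ(t)} ∈ R[[x,t]]`, where `x` is variable `0`
and `t` is variable `1`.  It is well defined since `x·Ψ(t)` has zero constant term. -/
def expXPsi {R : Type*} [CommRing R] [Algebra ℚ R] (Ψ : PowerSeries R) :
    MvPowerSeries (Fin 2) R :=
  psubst (MvPowerSeries.X 0 * tEmb Ψ) (PowerSeries.exp R)

/-- `f_n(x) = [tⁿ] e^{xΨ(t)} ∈ R[[x]]`: the coefficient of `tⁿ` in `e^{xΨ(t)}`,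
as a power series in `x`. -/
def convFam {R : Type*} [CommRing R] [Algebra ℚ R] (Ψ : PowerSeries R) (n : ℕ) :
    PowerSeries R :=
  PowerSeries.mk fun m =>
    MvPowerSeries.coeff (Finsupp.single 0 m + Finsupp.single 1 n) (expXPsi Ψ)

section cancel
variable {R : Type*} [CommRing R] [Algebra ℚ R]

lemma natCast_unit (q : ℕ) (hq : q ≠ 0) : IsUnit (q : R) := by
  have h1 : IsUnit ((q : ℚ)) := isUnit_iff_ne_zero.mpr (by exact_mod_cast hq)
  have h2 := h1.map (algebraMap ℚ R)
  simpa using h2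

lemma cancel_nat (q : ℕ) (hq : q ≠ 0) {x y : R} (h : (q : R) * x = (q : R) * y) : x = y :=
  (natCast_unit q hq).mul_left_cancel h

end cancel

section fin2
variable {R : Type*} [CommRing R]

lemma finsupp_fin2 (e : Fin 2 →₀ ℕ) :
    e = Finsupp.single 0 (e 0) + Finsupp.single 1 (e 1) := by
  ext s; fin_cases s <;> simp [Finsupp.single_apply]

lemma degFin2 (e : Fin 2 →₀ ℕ) : (e.sum fun _ m => m) = e 0 + e 1 := by
  rw [Finsupp.sum_fintype _ _ (fun _ => rfl), Fin.sum_univ_two]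

lemma psubst_X_apply (s : Fin 2) (g : PowerSeries R) (e : Fin 2 →₀ ℕ) :
    psubst (MvPowerSeries.X s) g e
      = if e = Finsupp.single s (e s) then PowerSeries.coeff (e s) g else 0 := by
  unfold psubst
  have h1 : ∀ n : ℕ, PowerSeries.coeff n g *
      MvPowerSeries.coeff e (MvPowerSeries.X s ^ n)
      = if e = Finsupp.single s n then PowerSeries.coeff n g else 0 := by
    intro n; rw [MvPowerSeries.coeff_X_pow]; split <;> simp
  simp_rw [h1]
  by_cases he : e = Finsupp.single s (e s)
  · rw [if_pos he, Finset.sum_eq_single (e s)]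
    · rw [if_pos he]
    · intro n _ hn; rw [if_neg]; intro h
      exact hn (by have := congrArg (fun d => d s) (he.symm.trans h); simpa using this.symm)
    · intro h
      exfalso; apply h; rw [Finset.mem_range]
      have hle : e s ≤ e 0 + e 1 := by fin_cases s <;> simp
      rw [degFin2]; omega
  · rw [if_neg he]
    refine Finset.sum_eq_zero fun n _ => ?_
    rw [if_neg]; intro h
    exact he (by rw [h]; simp)

end fin2

section fin2b
variable {R : Type*} [CommRing R]

lemma mv_coeff_apply (φ : MvPowerSeries (Fin 2) R) (e : Fin 2 →₀ ℕ) :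
    MvPowerSeries.coeff e φ = φ e := rfl

lemma coeff_mul_psubst (g h : PowerSeries R) (e : Fin 2 →₀ ℕ) :
    MvPowerSeries.coeff e
      (psubst (MvPowerSeries.X 0) g * psubst (MvPowerSeries.X 1) h)
      = PowerSeries.coeff (e 0) g * PowerSeries.coeff (e 1) h := by
  rw [MvPowerSeries.coeff_mul,
    Finset.sum_eq_single ((Finsupp.single 0 (e 0), Finsupp.single 1 (e 1)) : (Fin 2 →₀ ℕ) × (Fin 2 →₀ ℕ))]
  · rw [mv_coeff_apply, mv_coeff_apply, psubst_X_apply, psubst_X_apply]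
    rw [if_pos (by simp), if_pos (by simp)]
    simp
  · intro p hp hne
    rw [Finset.HasAntidiagonal.mem_antidiagonal] at hp
    rw [mv_coeff_apply, mv_coeff_apply, psubst_X_apply, psubst_X_apply]
    by_cases h1 : p.1 = Finsupp.single 0 (p.1 0)
    · by_cases h2 : p.2 = Finsupp.single 1 (p.2 1)
      · exfalso; apply hne
        have h20 : p.2 0 = 0 := by rw [h2]; simp
        have h11 : p.1 1 = 0 := by rw [h1]; simp [Finsupp.single_apply]
        have e0 : e 0 = p.1 0 := by rw [← hp]; simp [Finsupp.add_apply, h20]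
        have e1 : e 1 = p.2 1 := by rw [← hp]; simp [Finsupp.add_apply, h11]
        have : p.1 = Finsupp.single 0 (e 0) := by rw [e0]; exact h1
        have h2' : p.2 = Finsupp.single 1 (e 1) := by rw [e1]; exact h2
        exact Prod.ext this h2'
      · rw [if_neg h2, mul_zero]
    · rw [if_neg h1, zero_mul]
  · intro habs
    exfalso; apply habs
    rw [Finset.HasAntidiagonal.mem_antidiagonal]
    exact (finsupp_fin2 e).symm

lemma coeff_addX_pow (e : Fin 2 →₀ ℕ) (n : ℕ) :
    MvPowerSeries.coeff e ((MvPowerSeries.X (0 : Fin 2) + MvPowerSeries.X 1) ^ n)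
      = if n = e 0 + e 1 then (Nat.choose n (e 0) : R) else 0 := by
  rw [add_pow, map_sum]
  have hterm : ∀ k : ℕ, MvPowerSeries.coeff e
      (MvPowerSeries.X (0 : Fin 2) ^ k * MvPowerSeries.X 1 ^ (n - k) * ((n.choose k : ℕ) : MvPowerSeries (Fin 2) R))
      = if e = Finsupp.single 0 k + Finsupp.single 1 (n - k) then (n.choose k : R) else 0 := by
    intro k
    have hC : ((n.choose k : ℕ) : MvPowerSeries (Fin 2) R)
        = MvPowerSeries.monomial (0 : Fin 2 →₀ ℕ) ((n.choose k : ℕ) : R) := by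
      rw [MvPowerSeries.monomial_zero_eq_C_apply]
      exact (map_natCast (MvPowerSeries.C (σ := Fin 2) (R := R)) (n.choose k))|>.symm
    rw [MvPowerSeries.X_pow_eq, MvPowerSeries.X_pow_eq, MvPowerSeries.monomial_mul_monomial,
      hC, MvPowerSeries.monomial_mul_monomial, MvPowerSeries.coeff_monomial]
    simp
  simp_rw [hterm]
  by_cases hn : n = e 0 + e 1
  · rw [if_pos hn, Finset.sum_eq_single (e 0)]
    · have hcond : e = Finsupp.single 0 (e 0) + Finsupp.single 1 (n - e 0) := by
        rw [hn, Nat.add_sub_cancel_left]; exact finsupp_fin2 e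
      rw [if_pos hcond]
    · intro k _ hk
      rw [if_neg]; intro hcontra
      exact hk (by have := congrArg (fun d => d 0) hcontra; simpa [Finsupp.single_apply] using this.symm)
    · intro habs; exfalso; apply habs; rw [Finset.mem_range]; omega
  · rw [if_neg hn]
    refine Finset.sum_eq_zero fun k hk => ?_
    rw [if_neg]; intro hcontra
    apply hn
    have h0 := congrArg (fun d => d 0) hcontra
    have h1 := congrArg (fun d => d 1) hcontra
    simp [Finsupp.single_apply] at h0 h1
    rw [Finset.mem_range] at hk
    omega

lemma psubst_addX_apply (g : PowerSeries R) (e : Fin 2 →₀ ℕ) :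
    psubst (MvPowerSeries.X (0 : Fin 2) + MvPowerSeries.X 1) g e
      = (Nat.choose (e 0 + e 1) (e 0) : R) * PowerSeries.coeff (e 0 + e 1) g := by
  unfold psubst
  rw [degFin2, Finset.sum_eq_single (e 0 + e 1)]
  · rw [coeff_addX_pow, if_pos rfl, mul_comm]
  · intro n _ hn; rw [coeff_addX_pow, if_neg hn, mul_zero]
  · intro h; exact absurd (Finset.self_mem_range_succ _) h

end fin2b

theorem keyAlg {R : Type*} [CommRing R] [Algebra ℚ R]
    (hidem : ∀ e : R, e * e = e → e = 0 ∨ e = 1) (a : ℕ → ℕ → R)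
    (H : ∀ n m, ∑ k ∈ Finset.range (n+1), ∑ p ∈ Finset.HasAntidiagonal.antidiagonal m,
        a k p.1 * a (n-k) p.2 = 2^m * a n m) :
    ∀ n i j, ∑ k ∈ Finset.range (n+1), a k i * a (n-k) j
      = (Nat.choose (i+j) i : R) * a n (i+j) := by
  have h00 : a 0 0 * a 0 0 = a 0 0 := by have := H 0 0; simpa using this
  rcases hidem _ h00 with h0 | h0
  · -- degenerate case: everything vanishes
    have z0 : ∀ n, a n 0 = 0 := by
      intro n
      induction n using Nat.strong_induction_on with
      | _ n ih =>
        have h := H n 0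
        simp only [Finset.Nat.antidiagonal_zero, Finset.sum_singleton, pow_zero, one_mul] at h
        rw [← h]
        refine Finset.sum_eq_zero fun k hk => ?_
        rcases eq_or_lt_of_le (Nat.lt_succ_iff.mp (Finset.mem_range.mp hk)) with hkn | hkn
        · rw [hkn, Nat.sub_self, h0, mul_zero]
        · rw [ih k hkn, zero_mul]
    have zz : ∀ m n, a n m = 0 := by
      intro m
      induction m using Nat.strong_induction_on with
      | _ m ih =>
        intro n
        have h := H n m
        have hz : ∀ k ∈ Finset.range (n+1),
            ∑ p ∈ Finset.HasAntidiagonal.antidiagonal m, a k p.1 * a (n-k) p.2 = 0 := by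
          intro k _
          refine Finset.sum_eq_zero fun p hp => ?_
          rw [Finset.HasAntidiagonal.mem_antidiagonal] at hp
          rcases eq_or_lt_of_le (Nat.le.intro hp) with h1 | h1
          · have hp2 : p.2 = 0 := by omega
            rw [hp2, z0, mul_zero]
          · rw [ih p.1 h1, zero_mul]
        rw [Finset.sum_eq_zero hz] at h
        have h2 : ((2^m : ℕ) : R) * a n m = ((2^m : ℕ) : R) * 0 := by
          push_cast; rw [mul_zero, ← h]
        exact cancel_nat _ (pow_ne_zero m two_ne_zero) h2
    intro n i j
    rw [zz (i+j) n, mul_zero]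
    exact Finset.sum_eq_zero fun k _ => by rw [zz i k, zero_mul]
  · -- main case: a 0 0 = 1
    have d0 : ∀ n, a n 0 = if n = 0 then 1 else 0 := by
      intro n
      induction n using Nat.strong_induction_on with
      | _ n ih =>
        rcases n with _ | n'
        · simpa using h0
        · rw [if_neg (Nat.succ_ne_zero n')]
          have h := H (n'+1) 0
          simp only [Finset.Nat.antidiagonal_zero, Finset.sum_singleton, pow_zero, one_mul] at h
          rw [Finset.sum_range_succ] at h
          have hmid : ∑ k ∈ Finset.range (n'+1), a k 0 * a (n'+1-k) 0 = a (n'+1) 0 := by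
            rw [Finset.sum_range_succ']
            have hz : ∀ i ∈ Finset.range n', a (i+1) 0 * a (n'+1-(i+1)) 0 = 0 := by
              intro i hi
              rw [ih (i+1) (by rw [Finset.mem_range] at hi; omega),
                if_neg (Nat.succ_ne_zero i), zero_mul]
            rw [Finset.sum_eq_zero hz, zero_add, Nat.sub_zero, h0, one_mul]
          rw [hmid, Nat.sub_self, h0, mul_one] at h
          have : a (n'+1) 0 + a (n'+1) 0 = 0 + a (n'+1) 0 := by rw [h, zero_add]
          exact add_right_cancel this
    set Ψ : PowerSeries R := PowerSeries.mk (fun n => a n 1) with hΨ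
    set c : ℕ → ℕ → R := fun n m => PowerSeries.coeff n (Ψ ^ m) with hcc
    have hc1 : ∀ n, c n 1 = a n 1 := fun n => by simp [hcc, hΨ]
    have hconv : ∀ n i j, ∑ k ∈ Finset.range (n+1), c k i * c (n-k) j = c n (i+j) := by
      intro n i j
      have : c n (i+j) = PowerSeries.coeff n (Ψ^i * Ψ^j) := by rw [← pow_add]
      rw [this, PowerSeries.coeff_mul, Finset.Nat.sum_antidiagonal_eq_sum_range_succ_mk]
    have hb1 : ∀ n m, ∑ k ∈ Finset.range (n+1), a k 0 * a (n-k) m = a n m := by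
      intro n m
      rw [Finset.sum_range_succ']
      have hz : ∀ i ∈ Finset.range n, a (i+1) 0 * a (n-(i+1)) m = 0 := fun i _ => by
        rw [d0, if_neg (Nat.succ_ne_zero i), zero_mul]
      rw [Finset.sum_eq_zero hz, zero_add, Nat.sub_zero, h0, one_mul]
    have hb2 : ∀ n m, ∑ k ∈ Finset.range (n+1), a k m * a (n-k) 0 = a n m := by
      intro n m
      rw [Finset.sum_range_succ]
      have hz : ∀ k ∈ Finset.range n, a k m * a (n-k) 0 = 0 := by
        intro k hk
        rw [d0 (n-k), if_neg (by rw [Finset.mem_range] at hk; omega), mul_zero]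
      rw [Finset.sum_eq_zero hz, zero_add, Nat.sub_self, h0, mul_one]
    have key : ∀ m n, (m.factorial : R) * a n m = c n m := by
      intro m
      induction m using Nat.strong_induction_on with
      | _ m ih =>
        match m with
        | 0 => intro n; rw [d0 n]; simp [hcc, PowerSeries.coeff_one]
        | 1 => intro n; rw [hc1 n]; simp [Nat.factorial]
        | (m'+2) =>
          intro n
          have h := H n (m'+2)
          rw [Finset.sum_comm, Finset.Nat.sum_antidiagonal_eq_sum_range_succ_mk] at h
          -- h : ∑ i ∈ range (m'+3), ∑ k ∈ range (n+1), a k i * a (n-k) (m'+2-i) = 2^(m'+2)*a n (m'+2)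
          have hmul := congrArg (fun x => ((Nat.factorial (m'+2) : R)) * x) h
          simp only [Finset.mul_sum] at hmul
          rw [Finset.sum_range_succ, Finset.sum_range_succ'] at hmul
          have hS0 : ∑ k ∈ Finset.range (n+1), (Nat.factorial (m'+2) : R) * (a k 0 * a (n-k) (m'+2-0)) = (Nat.factorial (m'+2) : R) * a n (m'+2) := by
            rw [← Finset.mul_sum]
            congr 1
            rw [Nat.sub_zero] at *; exact hb1 n (m'+2)
          have hSm : ∑ k ∈ Finset.range (n+1), (Nat.factorial (m'+2) : R) * (a k (m'+2) * a (n-k) (m'+2-(m'+2))) = (Nat.factorial (m'+2) : R) * a n (m'+2) := by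
            rw [← Finset.mul_sum]
            congr 1
            rw [Nat.sub_self] at *; exact hb2 n (m'+2)
          rw [hS0, hSm] at hmul
          have hmid : ∀ i ∈ Finset.range (m'+1),
              ∑ k ∈ Finset.range (n+1), (Nat.factorial (m'+2) : R) * (a k (i+1) * a (n-k) (m'+2-(i+1)))
              = ((m'+2).choose (i+1) : R) * c n (m'+2) := by
            intro i hi
            rw [← Finset.mul_sum]
            rw [Finset.mem_range] at hi
            have hi1 : i + 1 < m' + 2 := by omega
            have hi2 : m' + 2 - (i+1) < m' + 2 := by omega
            have hfac : ((m'+2).choose (i+1) : R) * (((i+1).factorial : R) * ((m'+2-(i+1)).factorial : R))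
                = ((m'+2).factorial : R) := by
              rw_mod_cast [← mul_assoc]
              exact_mod_cast congrArg (fun q : ℕ => (q : R))
                (Nat.choose_mul_factorial_mul_factorial (le_of_lt hi1))
            have hsum : (((i+1).factorial : R) * ((m'+2-(i+1)).factorial : R)) *
                ∑ k ∈ Finset.range (n+1), a k (i+1) * a (n-k) (m'+2-(i+1)) = c n (m'+2) := by
              rw [Finset.mul_sum]
              have : ∀ k ∈ Finset.range (n+1),
                  (((i+1).factorial : R) * ((m'+2-(i+1)).factorial : R)) * (a k (i+1) * a (n-k) (m'+2-(i+1)))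
                  = c k (i+1) * c (n-k) (m'+2-(i+1)) := by
                intro k _
                rw [← ih (i+1) hi1 k, ← ih (m'+2-(i+1)) hi2 (n-k)]
                ring
              rw [Finset.sum_congr rfl this, hconv]
              congr 1
              omega
            rw [← hfac, mul_assoc, hsum]
          rw [Finset.sum_congr rfl hmid, ← Finset.sum_mul] at hmul
          -- now deal with the choose sum
          set T : ℕ := ∑ i ∈ Finset.range (m'+1), (m'+2).choose (i+1) with hT
          have hTsum : (∑ i ∈ Finset.range (m'+1), ((m'+2).choose (i+1) : R)) = (T : R) := by
            rw [hT]; push_cast; ring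
          rw [hTsum] at hmul
          have hT2 : T + 2 = 2^(m'+2) := by
            have h1 := Nat.sum_range_choose (m'+2)
            rw [Finset.sum_range_succ, Finset.sum_range_succ'] at h1
            simp only [Nat.choose_zero_right, Nat.choose_self] at h1
            omega
          have hT0 : T ≠ 0 := by
            have : 2^(m'+2) = 4 * 2^m' := by ring
            have h4 : 4 ≤ 2^(m'+2) := by rw [this]; have := Nat.one_le_two_pow (n := m'); omega
            omega
          have hcast : (2:R)^(m'+2) = (T : R) + 2 := by
            have : ((2^(m'+2) : ℕ) : R) = ((T + 2 : ℕ) : R) := by rw [hT2]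
            push_cast at this
            rw [this]
          rw [hcast] at hmul
          -- hmul : T*c + F*A + F*A = F*((T+2)*A)
          apply cancel_nat T hT0
          linear_combination -hmul
    intro n i j
    apply cancel_nat (i.factorial * j.factorial)
      (mul_ne_zero (Nat.factorial_ne_zero i) (Nat.factorial_ne_zero j))
    have lhs : ((i.factorial : R) * (j.factorial : R)) * ∑ k ∈ Finset.range (n+1), a k i * a (n-k) j
        = ((i+j).factorial : R) * a n (i+j) := by
      rw [Finset.mul_sum]
      have : ∀ k ∈ Finset.range (n+1),
          ((i.factorial : R) * (j.factorial : R)) * (a k i * a (n-k) j) = c k i * c (n-k) j := by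
        intro k _
        rw [← key i k, ← key j (n-k)]
        ring
      rw [Finset.sum_congr rfl this, hconv]
      exact (key (i+j) n).symm
    have rhs : ((i+j).factorial : R) = ((i+j).choose i : R) * (i.factorial : R) * (j.factorial : R) := by
      have h1 := Nat.choose_mul_factorial_mul_factorial (Nat.le_add_right i j)
      rw [Nat.add_sub_cancel_left] at h1
      have h2 := congrArg (fun q : ℕ => (q : R)) h1.symm
      push_cast at h2
      exact h2
    push_cast
    linear_combination lhs + (a n (i+j)) * rhs


/-- Let `R` be a commutative ring containing the rationals in
which the only idempotents are `0` and `1`.  Then every weak convolution family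
in `R[[x]]` is in fact a convolution family:  if
`∑_{k=0}^n f_k(x) f_{n-k}(x) = f_n(2x)` in `R[[x]]` for all `n` (the substitution
`x ↦ 2x` being `rescale 2`), then `∑_{k=0}^n f_k(x) f_{n-k}(y) = f_n(x+y)` holds
in `R[[x,y]]` for all `n` (here `x` is variable `0` and `y` is variable `1`). -/
theorem weak_convolution_family_is_convolution_family {R : Type*} [CommRing R]
    [Algebra ℚ R]
    (hidem : ∀ e : R, e * e = e → e = 0 ∨ e = 1)
    (f : ℕ → PowerSeries R)
    (hweak : ∀ n, ∑ k ∈ Finset.range (n + 1), f k * f (n - k) =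
      PowerSeries.rescale (2 : R) (f n)) :
    ∀ n, ∑ k ∈ Finset.range (n + 1),
        psubst (MvPowerSeries.X 0) (f k) * psubst (MvPowerSeries.X 1) (f (n - k)) =
      psubst (MvPowerSeries.X (0 : Fin 2) + MvPowerSeries.X 1) (f n) := by
  have H : ∀ n m, ∑ k ∈ Finset.range (n+1), ∑ p ∈ Finset.HasAntidiagonal.antidiagonal m,
      PowerSeries.coeff p.1 (f k) * PowerSeries.coeff p.2 (f (n-k))
      = 2^m * PowerSeries.coeff m (f n) := by
    intro n m
    have h := congrArg (PowerSeries.coeff m) (hweak n)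
    rw [map_sum, PowerSeries.coeff_rescale] at h
    simp_rw [PowerSeries.coeff_mul] at h
    exact h
  have KA := keyAlg hidem (fun n m => PowerSeries.coeff m (f n)) H
  intro n
  apply MvPowerSeries.ext
  intro e
  rw [map_sum]
  have hl : ∀ k ∈ Finset.range (n+1),
      MvPowerSeries.coeff e
        (psubst (MvPowerSeries.X 0) (f k) * psubst (MvPowerSeries.X 1) (f (n-k)))
      = PowerSeries.coeff (e 0) (f k) * PowerSeries.coeff (e 1) (f (n-k)) :=
    fun k _ => coeff_mul_psubst _ _ e
  rw [Finset.sum_congr rfl hl, mv_coeff_apply, psubst_addX_apply]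
  exact KA n (e 0) (e 1)
end
end

section
/- Let R be a commutative ring containing the rationals, and let (f_n)_{n≥0}, (g_n)_{n≥0}, (h_n)_{n≥0} be sequences in R[[x]] satisfying ∑_{k=0}^n f_k(x) g_{n-k}(y) = h_n(x+y) in R[[x,y]] for all n ≥ 0. Assume that the constant terms f_0(0) and g_0(0) are invertible elements of R. Then there exist unique formal power series A, B, Ψ ∈ R[[t]] such that f_n(x) = [t^n] A(t) e^{xΨ(t)}, g_n(x) = [t^n] B(t) e^{xΨ(t)}, and h_n(x) = [t^n] A(t) B(t) e^{xΨ(t)} for all n ≥ 0; moreover A and B are invertible in R[[t]]. -/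
noncomputable section

open PowerSeries

/-- `[tⁿ] A(t) e^{xΨ(t)} ∈ R[[x]]`: the coefficient of `tⁿ` in `A(t)e^{xΨ(t)}`,
as a power series in `x`. -/
def shefferFam {R : Type*} [CommRing R] [Algebra ℚ R] (A Ψ : PowerSeries R) (n : ℕ) :
    PowerSeries R :=
  PowerSeries.mk fun m =>
    MvPowerSeries.coeff (Finsupp.single 0 m + Finsupp.single 1 n) (tEmb A * expXPsi Ψ)

/-! ### Helper machinery -/

section Helpers

variable {R : Type*} [CommRing R]

def Emn (m n : ℕ) : Fin 2 →₀ ℕ := Finsupp.single 0 m + Finsupp.single 1 n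

@[simp] lemma Emn_apply0 (m n : ℕ) : Emn m n 0 = m := by
  simp [Emn, Finsupp.single_apply]

@[simp] lemma Emn_apply1 (m n : ℕ) : Emn m n 1 = n := by
  simp [Emn, Finsupp.single_apply]

lemma Emn_decomp (e : Fin 2 →₀ ℕ) : Emn (e 0) (e 1) = e := by
  ext i; fin_cases i <;> simp

lemma Emn_sum (m n : ℕ) : ((Emn m n).sum fun _ k => k) = m + n := by
  rw [Finsupp.sum_fintype _ _ (fun _ => rfl), Fin.sum_univ_two]; simp

lemma Emn_add (a b c d : ℕ) : Emn a c + Emn b d = Emn (a + b) (c + d) := by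
  ext i; fin_cases i <;> simp

lemma Emn_eq_zero_iff (m n : ℕ) : Emn m n = 0 ↔ m = 0 ∧ n = 0 := by
  constructor
  · intro h
    constructor
    · have := congrArg (fun e : Fin 2 →₀ ℕ => e 0) h; simpa using this
    · have := congrArg (fun e : Fin 2 →₀ ℕ => e 1) h; simpa using this
  · rintro ⟨rfl, rfl⟩; ext i; fin_cases i <;> simp

lemma sum_antidiagonal_emn (m n : ℕ) (f : (Fin 2 →₀ ℕ) × (Fin 2 →₀ ℕ) → R) :
    ∑ p ∈ Finset.HasAntidiagonal.antidiagonal (Emn m n), f p =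
      ∑ q ∈ Finset.HasAntidiagonal.antidiagonal m ×ˢ Finset.HasAntidiagonal.antidiagonal n,
        f (Emn q.1.1 q.2.1, Emn q.1.2 q.2.2) := by
  refine Finset.sum_bij' (fun p _ => ((p.1 0, p.2 0), (p.1 1, p.2 1)))
    (fun q _ => (Emn q.1.1 q.2.1, Emn q.1.2 q.2.2)) ?_ ?_ ?_ ?_ ?_
  · intro p hp
    rw [Finset.HasAntidiagonal.mem_antidiagonal] at hp
    simp only [Finset.mem_product, Finset.HasAntidiagonal.mem_antidiagonal]
    constructor
    · have := congrArg (fun e : Fin 2 →₀ ℕ => e 0) hp; simpa using this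
    · have := congrArg (fun e : Fin 2 →₀ ℕ => e 1) hp; simpa using this
  · intro q hq
    simp only [Finset.mem_product, Finset.HasAntidiagonal.mem_antidiagonal] at hq
    rw [Finset.HasAntidiagonal.mem_antidiagonal, Emn_add, hq.1, hq.2]
  · intro p hp
    simp only [Prod.ext_iff]
    exact ⟨Emn_decomp _, Emn_decomp _⟩
  · intro q hq
    simp [Prod.ext_iff]
  · intro p hp
    rw [Emn_decomp p.1, Emn_decomp p.2]

lemma coeff_mul₂ (F G : MvPowerSeries (Fin 2) R) (m n : ℕ) :
    MvPowerSeries.coeff (Emn m n) (F * G) =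
      ∑ a ∈ Finset.HasAntidiagonal.antidiagonal m, ∑ c ∈ Finset.HasAntidiagonal.antidiagonal n,
        MvPowerSeries.coeff (Emn a.1 c.1) F * MvPowerSeries.coeff (Emn a.2 c.2) G := by
  rw [MvPowerSeries.coeff_mul, sum_antidiagonal_emn, Finset.sum_product]

/-- the `m`-th row: coefficient of `x^m`, as a power series in `t`. -/
def row (m : ℕ) (F : MvPowerSeries (Fin 2) R) : PowerSeries R :=
  PowerSeries.mk fun n => MvPowerSeries.coeff (Emn m n) F

lemma coeff_row (m n : ℕ) (F : MvPowerSeries (Fin 2) R) :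
    PowerSeries.coeff n (row m F) = MvPowerSeries.coeff (Emn m n) F := by
  simp [row]

@[simp] lemma row_zero (m : ℕ) : row m (0 : MvPowerSeries (Fin 2) R) = 0 := by
  ext n; rw [coeff_row]; simp

lemma coeff_tEmb' (m n : ℕ) (A : PowerSeries R) :
    MvPowerSeries.coeff (Emn m n) (tEmb A) =
      if m = 0 then PowerSeries.coeff n A else 0 := by
  show (if Emn m n 0 = 0 then _ else 0) = _
  simp

lemma row_tEmb_mul (A : PowerSeries R) (F : MvPowerSeries (Fin 2) R) (m : ℕ) :
    row m (tEmb A * F) = A * row m F := by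
  ext n
  rw [coeff_row, coeff_mul₂, PowerSeries.coeff_mul]
  rw [Finset.sum_eq_single ((0 : ℕ), m)]
  · refine Finset.sum_congr rfl fun c hc => ?_
    rw [coeff_tEmb', if_pos rfl, coeff_row]
  · intro b hb hbne
    refine Finset.sum_eq_zero fun c hc => ?_
    rw [coeff_tEmb', if_neg, zero_mul]
    intro h0
    apply hbne
    rw [Finset.HasAntidiagonal.mem_antidiagonal] at hb
    obtain ⟨b1, b2⟩ := b
    simp only at h0
    subst h0
    simp only [zero_add] at hb
    rw [hb]
  · intro hmem
    exact absurd (Finset.HasAntidiagonal.mem_antidiagonal.2 (zero_add m)) hmem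

lemma Emn_sub_single0 (m n : ℕ) : Emn (m + 1) n - Finsupp.single 0 1 = Emn m n := by
  ext i; fin_cases i <;> simp [Finsupp.tsub_apply, Finsupp.single_apply]

lemma coeff_X0_tEmb (Ψ : PowerSeries R) (m n : ℕ) :
    MvPowerSeries.coeff (Emn m n) (MvPowerSeries.X 0 * tEmb Ψ) =
      if m = 1 then PowerSeries.coeff n Ψ else 0 := by
  rw [MvPowerSeries.X_def, MvPowerSeries.coeff_monomial_mul]
  rcases m with _ | m
  · rw [if_neg, if_neg]
    · omega
    · rw [Finsupp.single_le_iff]; simp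
  · rw [if_pos (Finsupp.single_le_iff.2 (by simp)), Emn_sub_single0, coeff_tEmb', one_mul]
    simp

lemma row_succ_X0tEmb_mul (Ψ : PowerSeries R) (F : MvPowerSeries (Fin 2) R) (m : ℕ) :
    row (m + 1) (MvPowerSeries.X 0 * tEmb Ψ * F) = Ψ * row m F := by
  ext n
  rw [coeff_row, coeff_mul₂, PowerSeries.coeff_mul]
  rw [Finset.sum_eq_single ((1 : ℕ), m)]
  · refine Finset.sum_congr rfl fun c hc => ?_
    rw [coeff_X0_tEmb, if_pos rfl, coeff_row]
  · intro b hb hbne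
    refine Finset.sum_eq_zero fun c hc => ?_
    rw [coeff_X0_tEmb, if_neg, zero_mul]
    intro h0
    apply hbne
    rw [Finset.HasAntidiagonal.mem_antidiagonal] at hb
    obtain ⟨b1, b2⟩ := b
    simp only at h0
    subst h0
    simp only [Prod.mk.injEq, true_and]
    omega
  · intro hmem
    exact absurd (Finset.HasAntidiagonal.mem_antidiagonal.2 (by omega)) hmem

lemma row_zero_X0tEmb_mul (Ψ : PowerSeries R) (F : MvPowerSeries (Fin 2) R) :
    row 0 (MvPowerSeries.X 0 * tEmb Ψ * F) = 0 := by
  ext n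
  rw [coeff_row, coeff_mul₂]
  refine Finset.sum_eq_zero fun a ha => Finset.sum_eq_zero fun c hc => ?_
  rw [coeff_X0_tEmb, if_neg, zero_mul]
  rw [Finset.HasAntidiagonal.mem_antidiagonal] at ha
  omega

lemma row_one (m : ℕ) :
    row m (1 : MvPowerSeries (Fin 2) R) = if m = 0 then 1 else 0 := by
  ext n
  rw [coeff_row]
  classical
  rw [MvPowerSeries.coeff_one]
  rcases Nat.eq_zero_or_pos m with rfl | hm
  · simp [Emn_eq_zero_iff, PowerSeries.coeff_one]
  · rw [if_neg (by rw [Emn_eq_zero_iff]; omega), if_neg (by omega)]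
    simp

lemma row_pow (Ψ : PowerSeries R) (j m : ℕ) :
    row m ((MvPowerSeries.X 0 * tEmb Ψ) ^ j) = if j = m then Ψ ^ j else 0 := by
  induction j generalizing m with
  | zero =>
    rw [pow_zero, row_one]
    rcases Nat.eq_zero_or_pos m with rfl | hm
    · simp
    · rw [if_neg (by omega), if_neg (by omega)]
  | succ j ih =>
    rw [pow_succ']
    rcases m with _ | m
    · rw [row_zero_X0tEmb_mul, if_neg (by omega)]
    · rw [row_succ_X0tEmb_mul, ih]
      by_cases h : j = m
      · subst h
        rw [if_pos rfl, if_pos rfl, pow_succ']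
      · rw [if_neg h, if_neg (by omega), mul_zero]

lemma row_expXPsi [Algebra ℚ R] (Ψ : PowerSeries R) (m : ℕ) :
    row m (expXPsi Ψ) =
      PowerSeries.C (PowerSeries.coeff m (PowerSeries.exp R)) * Ψ ^ m := by
  ext n
  rw [coeff_row]
  show ∑ j ∈ Finset.range (((Emn m n).sum fun _ k => k) + 1),
      PowerSeries.coeff j (PowerSeries.exp R) *
        MvPowerSeries.coeff (Emn m n) ((MvPowerSeries.X 0 * tEmb Ψ) ^ j) = _
  rw [Emn_sum, Finset.sum_eq_single m]
  · rw [← coeff_row, row_pow, if_pos rfl, PowerSeries.coeff_C_mul]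
  · intro j hj hne
    rw [← coeff_row, row_pow, if_neg hne]
    simp
  · intro hmem
    exact absurd (Finset.mem_range.2 (by omega)) hmem

lemma coeff_shefferFam [Algebra ℚ R] (A Ψ : PowerSeries R) (n m : ℕ) :
    PowerSeries.coeff m (shefferFam A Ψ n) =
      PowerSeries.coeff n
        (PowerSeries.C (PowerSeries.coeff m (PowerSeries.exp R)) * (A * Ψ ^ m)) := by
  rw [shefferFam, PowerSeries.coeff_mk]
  show MvPowerSeries.coeff (Emn m n) (tEmb A * expXPsi Ψ) = _
  rw [← coeff_row, row_tEmb_mul, row_expXPsi, mul_left_comm]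

lemma Emn_eq_single0_iff (m n j : ℕ) :
    Emn m n = Finsupp.single 0 j ↔ m = j ∧ n = 0 := by
  constructor
  · intro h
    constructor
    · have := congrArg (fun e : Fin 2 →₀ ℕ => e 0) h
      simpa [Finsupp.single_apply] using this
    · have := congrArg (fun e : Fin 2 →₀ ℕ => e 1) h
      simpa [Finsupp.single_apply] using this
  · rintro ⟨rfl, rfl⟩; ext i; fin_cases i <;> simp [Finsupp.single_apply]

lemma Emn_eq_single1_iff (m n j : ℕ) :
    Emn m n = Finsupp.single 1 j ↔ m = 0 ∧ n = j := by
  constructor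
  · intro h
    constructor
    · have := congrArg (fun e : Fin 2 →₀ ℕ => e 0) h
      simpa [Finsupp.single_apply] using this
    · have := congrArg (fun e : Fin 2 →₀ ℕ => e 1) h
      simpa [Finsupp.single_apply] using this
  · rintro ⟨rfl, rfl⟩; ext i; fin_cases i <;> simp [Finsupp.single_apply]

lemma coeff_psubst_X0 (f : PowerSeries R) (m n : ℕ) :
    MvPowerSeries.coeff (Emn m n) (psubst (MvPowerSeries.X 0) f) =
      if n = 0 then PowerSeries.coeff m f else 0 := by
  show ∑ j ∈ Finset.range (((Emn m n).sum fun _ k => k) + 1),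
      PowerSeries.coeff j f *
        MvPowerSeries.coeff (Emn m n) ((MvPowerSeries.X (0 : Fin 2)) ^ j) = _
  rw [Emn_sum, Finset.sum_eq_single m]
  · classical
    rw [MvPowerSeries.coeff_X_pow]
    by_cases hn : n = 0
    · rw [if_pos hn, if_pos (by rw [Emn_eq_single0_iff]; omega), mul_one]
    · rw [if_neg hn, if_neg (by rw [Emn_eq_single0_iff]; omega), mul_zero]
  · intro j hj hne
    classical
    rw [MvPowerSeries.coeff_X_pow, if_neg (by rw [Emn_eq_single0_iff]; omega), mul_zero]
  · intro hmem
    exact absurd (Finset.mem_range.2 (by omega)) hmem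

lemma coeff_psubst_X1 (g : PowerSeries R) (m n : ℕ) :
    MvPowerSeries.coeff (Emn m n) (psubst (MvPowerSeries.X 1) g) =
      if m = 0 then PowerSeries.coeff n g else 0 := by
  show ∑ j ∈ Finset.range (((Emn m n).sum fun _ k => k) + 1),
      PowerSeries.coeff j g *
        MvPowerSeries.coeff (Emn m n) ((MvPowerSeries.X (1 : Fin 2)) ^ j) = _
  rw [Emn_sum, Finset.sum_eq_single n]
  · classical
    rw [MvPowerSeries.coeff_X_pow]
    by_cases hm : m = 0
    · rw [if_pos hm, if_pos (by rw [Emn_eq_single1_iff]; omega), mul_one]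
    · rw [if_neg hm, if_neg (by rw [Emn_eq_single1_iff]; omega), mul_zero]
  · intro j hj hne
    classical
    rw [MvPowerSeries.coeff_X_pow, if_neg (by rw [Emn_eq_single1_iff]; omega), mul_zero]
  · intro hmem
    exact absurd (Finset.mem_range.2 (by omega)) hmem

lemma coeff_psubst_X0_mul_X1 (f g : PowerSeries R) (m p : ℕ) :
    MvPowerSeries.coeff (Emn m p)
        (psubst (MvPowerSeries.X 0) f * psubst (MvPowerSeries.X 1) g) =
      PowerSeries.coeff m f * PowerSeries.coeff p g := by
  rw [coeff_mul₂, Finset.sum_eq_single ((m : ℕ), 0)]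
  · rw [Finset.sum_eq_single ((0 : ℕ), p)]
    · rw [coeff_psubst_X0, if_pos rfl, coeff_psubst_X1, if_pos rfl]
    · intro c hc hne
      rw [Finset.HasAntidiagonal.mem_antidiagonal] at hc
      by_cases h1 : c.1 = 0
      · exfalso
        apply hne
        obtain ⟨c1, c2⟩ := c
        simp only at h1
        subst h1
        simp only [zero_add] at hc
        rw [hc]
      · rw [coeff_psubst_X0, if_neg h1, zero_mul]
    · intro hmem
      exact absurd (Finset.HasAntidiagonal.mem_antidiagonal.2 (zero_add p)) hmem
  · intro a ha hane
    refine Finset.sum_eq_zero fun c hc => ?_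
    rw [Finset.HasAntidiagonal.mem_antidiagonal] at ha
    by_cases h2 : a.2 = 0
    · exfalso
      apply hane
      obtain ⟨a1, a2⟩ := a
      simp only at h2
      subst h2
      simp only [add_zero] at ha
      rw [ha]
    · rw [coeff_psubst_X1, if_neg h2, mul_zero]
  · intro hmem
    exact absurd (Finset.HasAntidiagonal.mem_antidiagonal.2 (add_zero m)) hmem

lemma Emn_sub_single1 (m n : ℕ) : Emn m (n + 1) - Finsupp.single 1 1 = Emn m n := by
  ext i; fin_cases i <;> simp [Finsupp.tsub_apply, Finsupp.single_apply]

lemma coeff_X0_mul_zero (F : MvPowerSeries (Fin 2) R) (p : ℕ) :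
    MvPowerSeries.coeff (Emn 0 p) (MvPowerSeries.X 0 * F) = 0 := by
  rw [MvPowerSeries.X_def, MvPowerSeries.coeff_monomial_mul, if_neg]
  rw [Finsupp.single_le_iff]; simp

lemma coeff_X0_mul_succ (F : MvPowerSeries (Fin 2) R) (m p : ℕ) :
    MvPowerSeries.coeff (Emn (m + 1) p) (MvPowerSeries.X 0 * F) =
      MvPowerSeries.coeff (Emn m p) F := by
  rw [MvPowerSeries.X_def, MvPowerSeries.coeff_monomial_mul,
    if_pos (Finsupp.single_le_iff.2 (by simp)), Emn_sub_single0, one_mul]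

lemma coeff_X1_mul_zero (F : MvPowerSeries (Fin 2) R) (m : ℕ) :
    MvPowerSeries.coeff (Emn m 0) (MvPowerSeries.X 1 * F) = 0 := by
  rw [MvPowerSeries.X_def, MvPowerSeries.coeff_monomial_mul, if_neg]
  rw [Finsupp.single_le_iff]; simp

lemma coeff_X1_mul_succ (F : MvPowerSeries (Fin 2) R) (m p : ℕ) :
    MvPowerSeries.coeff (Emn m (p + 1)) (MvPowerSeries.X 1 * F) =
      MvPowerSeries.coeff (Emn m p) F := by
  rw [MvPowerSeries.X_def, MvPowerSeries.coeff_monomial_mul,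
    if_pos (Finsupp.single_le_iff.2 (by simp)), Emn_sub_single1, one_mul]

lemma coeff_add_pow (j m p : ℕ) :
    MvPowerSeries.coeff (Emn m p)
        ((MvPowerSeries.X (0 : Fin 2) + MvPowerSeries.X 1 : MvPowerSeries (Fin 2) R) ^ j) =
      if m + p = j then (j.choose m : R) else 0 := by
  induction j generalizing m p with
  | zero =>
    rw [pow_zero]
    classical
    rw [MvPowerSeries.coeff_one]
    by_cases h : m = 0 ∧ p = 0
    · obtain ⟨rfl, rfl⟩ := h
      rw [if_pos ((Emn_eq_zero_iff 0 0).2 ⟨rfl, rfl⟩), if_pos rfl]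
      simp
    · rw [if_neg (fun hh => h ((Emn_eq_zero_iff m p).1 hh)), if_neg (by omega)]
  | succ j ih =>
    rw [pow_succ', add_mul, map_add]
    rcases m with _ | m <;> rcases p with _ | p
    · rw [coeff_X0_mul_zero, coeff_X1_mul_zero, if_neg (by omega), add_zero]
    · rw [coeff_X0_mul_zero, coeff_X1_mul_succ, ih, zero_add]
      rcases eq_or_ne p j with rfl | h
      · rw [if_pos (by omega), if_pos (by omega)]
        simp
      · rw [if_neg (by omega), if_neg (by omega)]
    · rw [coeff_X0_mul_succ, coeff_X1_mul_zero, ih, add_zero]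
      rcases eq_or_ne m j with rfl | h
      · rw [if_pos (by omega), if_pos (by omega)]
        simp
      · rw [if_neg (by omega), if_neg (by omega)]
    · rw [coeff_X0_mul_succ, coeff_X1_mul_succ, ih, ih]
      rcases eq_or_ne (m + p + 1) j with rfl | h
      · rw [if_pos (by omega), if_pos (by omega), if_pos (by omega), ← Nat.cast_add,
          ← Nat.choose_succ_succ]
      · rw [if_neg (by omega), if_neg (by omega), if_neg (by omega), add_zero]

lemma coeff_psubst_Xadd (h : PowerSeries R) (m p : ℕ) :
    MvPowerSeries.coeff (Emn m p)
        (psubst (MvPowerSeries.X (0 : Fin 2) + MvPowerSeries.X 1) h) =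
      ((m + p).choose m : R) * PowerSeries.coeff (m + p) h := by
  show ∑ j ∈ Finset.range (((Emn m p).sum fun _ k => k) + 1),
      PowerSeries.coeff j h * MvPowerSeries.coeff (Emn m p)
        ((MvPowerSeries.X (0 : Fin 2) + MvPowerSeries.X 1) ^ j) = _
  rw [Emn_sum, Finset.sum_eq_single (m + p)]
  · rw [coeff_add_pow, if_pos rfl, mul_comm]
  · intro j hj hne
    rw [coeff_add_pow, if_neg (by omega), mul_zero]
  · intro hmem
    exact absurd (Finset.mem_range.2 (by omega)) hmem

end Helpers

section Main

variable {R : Type*} [CommRing R] [Algebra ℚ R]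

lemma exp_coeff_zero : PowerSeries.coeff 0 (PowerSeries.exp R) = 1 := by
  rw [PowerSeries.coeff_exp]
  simp

lemma exp_coeff_one : PowerSeries.coeff 1 (PowerSeries.exp R) = 1 := by
  rw [PowerSeries.coeff_exp]
  simp [Nat.factorial]

lemma factorial_mul_exp_coeff (m : ℕ) :
    (m.factorial : R) * PowerSeries.coeff m (PowerSeries.exp R) = 1 := by
  rw [PowerSeries.coeff_exp, show ((m.factorial : ℕ) : R) = algebraMap ℚ R (m.factorial : ℚ) by
    rw [map_natCast], ← map_mul, mul_one_div,
    div_self (by exact_mod_cast m.factorial_ne_zero), map_one]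

/-- the sequence of `x^m`-coefficients, as power series in `t` -/
def rowSeq (f : ℕ → PowerSeries R) (m : ℕ) : PowerSeries R :=
  PowerSeries.mk fun n => PowerSeries.coeff m (f n)

lemma toSheff (u : ℕ → PowerSeries R) (P Ψ' : PowerSeries R) :
    (∀ n, u n = shefferFam P Ψ' n) ↔
      (∀ m, rowSeq u m =
        PowerSeries.C (PowerSeries.coeff m (PowerSeries.exp R)) * (P * Ψ' ^ m)) := by
  constructor
  · intro H m
    ext n
    rw [rowSeq, PowerSeries.coeff_mk, H n, coeff_shefferFam]
  · intro H n
    ext m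
    rw [coeff_shefferFam, ← H m, rowSeq, PowerSeries.coeff_mk]

end Main

/-- Let `R` be a commutative ring containing the rationals, and
let `(f_n), (g_n), (h_n)` be sequences in `R[[x]]` satisfying
`∑_{k=0}^n f_k(x) g_{n-k}(y) = h_n(x+y)` in `R[[x,y]]` for all `n` (here `x` is
variable `0` and `y` is variable `1`).  Assume the constant terms `f₀(0)` and
`g₀(0)` are invertible in `R`.  Then there exist unique `A, B, Ψ ∈ R[[t]]` such
that `f_n(x) = [tⁿ] A(t)e^{xΨ(t)}`, `g_n(x) = [tⁿ] B(t)e^{xΨ(t)}` and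
`h_n(x) = [tⁿ] A(t)B(t)e^{xΨ(t)}` for all `n`; moreover `A` and `B` are
invertible in `R[[t]]`. -/
theorem sheffer_classification {R : Type*} [CommRing R] [Algebra ℚ R]
    (f g h : ℕ → PowerSeries R)
    (hconv : ∀ n, ∑ k ∈ Finset.range (n + 1),
        psubst (MvPowerSeries.X 0) (f k) * psubst (MvPowerSeries.X 1) (g (n - k)) =
      psubst (MvPowerSeries.X (0 : Fin 2) + MvPowerSeries.X 1) (h n))
    (hf0 : IsUnit (PowerSeries.constantCoeff (f 0)))
    (hg0 : IsUnit (PowerSeries.constantCoeff (g 0))) :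
    ∃ A B Ψ : PowerSeries R,
      (∀ n, f n = shefferFam A Ψ n) ∧
      (∀ n, g n = shefferFam B Ψ n) ∧
      (∀ n, h n = shefferFam (A * B) Ψ n) ∧
      IsUnit A ∧ IsUnit B ∧
      ∀ A' B' Ψ' : PowerSeries R,
        ((∀ n, f n = shefferFam A' Ψ' n) ∧
         (∀ n, g n = shefferFam B' Ψ' n) ∧
         (∀ n, h n = shefferFam (A' * B') Ψ' n)) →
        A' = A ∧ B' = B ∧ Ψ' = Ψ := by
  classical
  -- coefficientwise form of the convolution hypothesis
  have hco : ∀ n m p, ∑ k ∈ Finset.range (n + 1),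
      PowerSeries.coeff m (f k) * PowerSeries.coeff p (g (n - k)) =
      ((m + p).choose m : R) * PowerSeries.coeff (m + p) (h n) := by
    intro n m p
    have H := congrArg (MvPowerSeries.coeff (Emn m p)) (hconv n)
    rw [map_sum, coeff_psubst_Xadd] at H
    simpa only [coeff_psubst_X0_mul_X1] using H
  -- the rows of f, g, h as series in t
  set Fs : ℕ → PowerSeries R := rowSeq f with hFsdef
  set Gs : ℕ → PowerSeries R := rowSeq g with hGsdef
  set Hs : ℕ → PowerSeries R := rowSeq h with hHsdef
  have rel : ∀ m p, Fs m * Gs p =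
      PowerSeries.C ((m + p).choose m : R) * Hs (m + p) := by
    intro m p
    ext n
    rw [PowerSeries.coeff_mul, PowerSeries.coeff_C_mul,
      Finset.Nat.sum_antidiagonal_eq_sum_range_succ_mk]
    simp only [hFsdef, hGsdef, hHsdef, rowSeq, PowerSeries.coeff_mk]
    exact hco n m p
  have hFs0 : IsUnit (Fs 0) := by
    rw [PowerSeries.isUnit_iff_constantCoeff, ← PowerSeries.coeff_zero_eq_constantCoeff_apply]
    simpa [hFsdef, rowSeq, PowerSeries.coeff_zero_eq_constantCoeff_apply] using hf0
  have hGs0 : IsUnit (Gs 0) := by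
    rw [PowerSeries.isUnit_iff_constantCoeff, ← PowerSeries.coeff_zero_eq_constantCoeff_apply]
    simpa [hGsdef, rowSeq, PowerSeries.coeff_zero_eq_constantCoeff_apply] using hg0
  have relm0 : ∀ m, Fs m * Gs 0 = Hs m := by
    intro m
    have := rel m 0
    simpa using this
  have rel0p : ∀ p, Fs 0 * Gs p = Hs p := by
    intro p
    have := rel 0 p
    simpa using this
  have key : ∀ m p, Fs m * Fs p =
      PowerSeries.C ((m + p).choose m : R) * (Fs 0 * Fs (m + p)) := by
    intro m p
    apply hGs0.mul_right_cancel
    calc (Fs m * Fs p) * Gs 0 = Fs m * (Fs p * Gs 0) := by ring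
      _ = Fs m * Hs p := by rw [relm0]
      _ = Fs m * (Fs 0 * Gs p) := by rw [rel0p]
      _ = Fs 0 * (Fs m * Gs p) := by ring
      _ = Fs 0 * (PowerSeries.C ((m + p).choose m : R) * Hs (m + p)) := by rw [rel m p]
      _ = Fs 0 * (PowerSeries.C ((m + p).choose m : R) * (Fs (m + p) * Gs 0)) := by
          rw [relm0]
      _ = (PowerSeries.C ((m + p).choose m : R) * (Fs 0 * Fs (m + p))) * Gs 0 := by ring
  set Ψ : PowerSeries R := (↑hFs0.unit⁻¹ : PowerSeries R) * Fs 1 with hΨdef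
  have hAPsi : Fs 0 * Ψ = Fs 1 := by
    rw [hΨdef, ← mul_assoc, hFs0.mul_val_inv, one_mul]
  have hfact : ∀ m, PowerSeries.C (m.factorial : R) * Fs m = Fs 0 * Ψ ^ m := by
    intro m
    induction m with
    | zero => simp
    | succ m ih =>
      apply hFs0.mul_left_cancel
      have hkey := key m 1
      rw [Nat.choose_succ_self_right] at hkey
      calc Fs 0 * (PowerSeries.C ((m + 1).factorial : R) * Fs (m + 1))
          = PowerSeries.C (m.factorial : R) *
              (PowerSeries.C (((m : ℕ) + 1 : ℕ) : R) * (Fs 0 * Fs (m + 1))) := by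
            rw [Nat.factorial_succ, Nat.cast_mul, map_mul]
            ring
        _ = PowerSeries.C (m.factorial : R) * (Fs m * Fs 1) := by rw [← hkey]
        _ = (PowerSeries.C (m.factorial : R) * Fs m) * Fs 1 := by ring
        _ = (Fs 0 * Ψ ^ m) * Fs 1 := by rw [ih]
        _ = (Fs 0 * Ψ ^ m) * (Fs 0 * Ψ) := by rw [hAPsi]
        _ = Fs 0 * (Fs 0 * Ψ ^ (m + 1)) := by ring
  have hFm : ∀ m, Fs m =
      PowerSeries.C (PowerSeries.coeff m (PowerSeries.exp R)) * (Fs 0 * Ψ ^ m) := by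
    intro m
    calc Fs m = (PowerSeries.C (m.factorial : R) *
          PowerSeries.C (PowerSeries.coeff m (PowerSeries.exp R))) * Fs m := by
          rw [← map_mul, factorial_mul_exp_coeff, map_one, one_mul]
      _ = PowerSeries.C (PowerSeries.coeff m (PowerSeries.exp R)) *
          (PowerSeries.C (m.factorial : R) * Fs m) := by ring
      _ = _ := by rw [hfact m]
  have hGm : ∀ m, Gs m =
      PowerSeries.C (PowerSeries.coeff m (PowerSeries.exp R)) * (Gs 0 * Ψ ^ m) := by
    intro m
    apply hFs0.mul_left_cancel
    calc Fs 0 * Gs m = Hs m := rel0p m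
      _ = Fs m * Gs 0 := (relm0 m).symm
      _ = (PowerSeries.C (PowerSeries.coeff m (PowerSeries.exp R)) *
            (Fs 0 * Ψ ^ m)) * Gs 0 := by rw [hFm m]
      _ = Fs 0 * (PowerSeries.C (PowerSeries.coeff m (PowerSeries.exp R)) *
            (Gs 0 * Ψ ^ m)) := by ring
  have hHm : ∀ m, Hs m =
      PowerSeries.C (PowerSeries.coeff m (PowerSeries.exp R)) *
        ((Fs 0 * Gs 0) * Ψ ^ m) := by
    intro m
    calc Hs m = Fs m * Gs 0 := (relm0 m).symm
      _ = (PowerSeries.C (PowerSeries.coeff m (PowerSeries.exp R)) *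
            (Fs 0 * Ψ ^ m)) * Gs 0 := by rw [hFm m]
      _ = _ := by ring
  refine ⟨Fs 0, Gs 0, Ψ, (toSheff f _ _).2 hFm, (toSheff g _ _).2 hGm,
    (toSheff h _ _).2 hHm, hFs0, hGs0, ?_⟩
  rintro A' B' Ψ' ⟨u1, u2, u3⟩
  have hFm' := (toSheff f A' Ψ').1 u1
  have hGm' := (toSheff g B' Ψ').1 u2
  have hA : A' = Fs 0 := by
    have := hFm' 0
    rw [exp_coeff_zero, map_one, one_mul, pow_zero, mul_one] at this
    exact this.symm
  have hB : B' = Gs 0 := by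
    have := hGm' 0
    rw [exp_coeff_zero, map_one, one_mul, pow_zero, mul_one] at this
    exact this.symm
  refine ⟨hA, hB, ?_⟩
  apply hFs0.mul_left_cancel
  have h1 := hFm' 1
  rw [exp_coeff_one, map_one, one_mul, pow_one, hA] at h1
  rw [← h1, hAPsi]
end
end
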